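/- For any constants c₁, c₃ > 0 and β ≥ 0, ∫₀^{π/2} min{2c₁, c₃·β / sin²α}·cos α dα ≤ 2·√(2·c₁·c₃·β). -/

import Mathlib

open Real MeasureTheory

/-- For constants `c₁, c₃ > 0` and `β ≥ 0`,
`∫₀^{π/2} min{2c₁, c₃·β/sin²α}·cos α dα ≤ 2·√(2·c₁·c₃·β)`. -/
theorem stmt3 (c₁ c₃ β : ℝ) (hc₁ : 0 < c₁) (hc₃ : 0 < c₃) (hβ : 0 ≤ β) :
    ∫ α in (0:ℝ)..(π / 2), min (2 * c₁) (c₃ * β / Real.sin α ^ 2) * Real.cos α ≤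
      2 * Real.sqrt (2 * c₁ * c₃ * β) := by
  rcases eq_or_lt_of_le hβ with hβ0 | hβpos
  · -- β = 0 case
    simp only [← hβ0, mul_zero, zero_div, min_eq_right (by linarith : (0:ℝ) ≤ 2 * c₁)]
    simp [Real.sqrt_nonneg]
  -- β > 0 case
  set F : ℝ → ℝ := fun α => min (2 * c₁) (c₃ * β / Real.sin α ^ 2) * Real.cos α with hF
  set s₀ : ℝ := Real.sqrt (c₃ * β / (2 * c₁)) with hs₀def
  have hcb : 0 < c₃ * β := mul_pos hc₃ hβpos
  have hs₀pos : 0 < s₀ := Real.sqrt_pos.mpr (by positivity)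
  have hs₀sq : s₀ ^ 2 = c₃ * β / (2 * c₁) := Real.sq_sqrt (by positivity)
  set t : ℝ := min 1 s₀ with htdef
  have htpos : 0 < t := lt_min one_pos hs₀pos
  have htle1 : t ≤ 1 := min_le_left _ _
  set α₀ : ℝ := Real.arcsin t with hα₀def
  have hsin : Real.sin α₀ = t := Real.sin_arcsin (by linarith) htle1
  have hα₀pos : 0 < α₀ := Real.arcsin_pos.mpr htpos
  have hα₀le : α₀ ≤ π / 2 := Real.arcsin_le_pi_div_two t
  -- integrability of F on [0, π/2]
  have hFm : ∀ a b : ℝ, AEStronglyMeasurable F (volume.restrict (Set.uIoc a b)) := by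
    intro a b
    apply Measurable.aestronglyMeasurable
    exact ((measurable_const.min ((measurable_const.div
      ((Real.measurable_sin).pow_const 2)))).mul Real.measurable_cos)
  have hFint : IntervalIntegrable F volume 0 (π / 2) := by
    apply IntervalIntegrable.mono_fun' (g := fun _ => 2 * c₁)
      intervalIntegrable_const (hFm 0 (π / 2))
    filter_upwards with x
    have h1 : 0 ≤ c₃ * β / Real.sin x ^ 2 := by positivity
    have h2 : 0 ≤ min (2 * c₁) (c₃ * β / Real.sin x ^ 2) := le_min (by linarith) h1
    have h3 : min (2 * c₁) (c₃ * β / Real.sin x ^ 2) ≤ 2 * c₁ := min_le_left _ _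
    have h4 : |Real.cos x| ≤ 1 := Real.abs_cos_le_one x
    calc ‖F x‖ = min (2 * c₁) (c₃ * β / Real.sin x ^ 2) * |Real.cos x| := by
          rw [Real.norm_eq_abs, abs_mul, abs_of_nonneg h2]
      _ ≤ 2 * c₁ * 1 := mul_le_mul h3 h4 (abs_nonneg _) (by linarith)
      _ = 2 * c₁ := mul_one _
  have hFint1 : IntervalIntegrable F volume 0 α₀ :=
    hFint.mono_set (by
      rw [Set.uIcc_of_le hα₀pos.le, Set.uIcc_of_le (by linarith [Real.pi_pos] : (0:ℝ) ≤ π / 2)]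
      exact Set.Icc_subset_Icc le_rfl hα₀le)
  have hFint2 : IntervalIntegrable F volume α₀ (π / 2) :=
    hFint.mono_set (by
      rw [Set.uIcc_of_le hα₀le, Set.uIcc_of_le (by linarith [Real.pi_pos] : (0:ℝ) ≤ π / 2)]
      exact Set.Icc_subset_Icc hα₀pos.le le_rfl)
  have hsplit : ∫ α in (0:ℝ)..(π / 2), F α =
      (∫ α in (0:ℝ)..α₀, F α) + ∫ α in α₀..(π / 2), F α :=
    (intervalIntegral.integral_add_adjacent_intervals hFint1 hFint2).symm
  -- bound first piece
  have hb1 : (∫ α in (0:ℝ)..α₀, F α) ≤ 2 * c₁ * t := by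
    have : (∫ α in (0:ℝ)..α₀, F α) ≤ ∫ α in (0:ℝ)..α₀, 2 * c₁ * Real.cos α := by
      apply intervalIntegral.integral_mono_on hα₀pos.le hFint1
      · exact ((continuous_const.mul Real.continuous_cos).intervalIntegrable _ _)
      · intro x hx
        have hcos : 0 ≤ Real.cos x :=
          Real.cos_nonneg_of_mem_Icc ⟨by linarith [hx.1], by linarith [hx.2]⟩
        exact mul_le_mul_of_nonneg_right (min_le_left _ _) hcos
    calc (∫ α in (0:ℝ)..α₀, F α) ≤ ∫ α in (0:ℝ)..α₀, 2 * c₁ * Real.cos α := this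
      _ = 2 * c₁ * (Real.sin α₀ - Real.sin 0) := by
          rw [intervalIntegral.integral_const_mul]
          norm_num [integral_cos]
      _ = 2 * c₁ * t := by rw [hsin, Real.sin_zero, sub_zero]
  -- bound second piece
  have hsinpos : ∀ x ∈ Set.Icc α₀ (π / 2), 0 < Real.sin x := by
    intro x hx
    have : 0 < x := lt_of_lt_of_le hα₀pos hx.1
    exact Real.sin_pos_of_pos_of_lt_pi this (by linarith [Real.pi_pos, hx.2])
  have hb2 : (∫ α in α₀..(π / 2), F α) ≤ c₃ * β / t - c₃ * β := by
    have hGint : IntervalIntegrable (fun α => c₃ * β * Real.cos α / Real.sin α ^ 2)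
        volume α₀ (π / 2) := by
      apply ContinuousOn.intervalIntegrable
      apply ContinuousOn.div
      · exact (continuous_const.mul Real.continuous_cos).continuousOn
      · exact (Real.continuous_sin.pow 2).continuousOn
      · intro x hx
        rw [Set.uIcc_of_le hα₀le] at hx
        exact pow_ne_zero 2 (hsinpos x hx).ne'
    have hle : (∫ α in α₀..(π / 2), F α) ≤
        ∫ α in α₀..(π / 2), c₃ * β * Real.cos α / Real.sin α ^ 2 := by
      apply intervalIntegral.integral_mono_on hα₀le hFint2 hGint
      intro x hx
      have hcos : 0 ≤ Real.cos x :=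
        Real.cos_nonneg_of_mem_Icc ⟨by linarith [hα₀pos, hx.1], hx.2⟩
      calc F x ≤ (c₃ * β / Real.sin x ^ 2) * Real.cos x :=
            mul_le_mul_of_nonneg_right (min_le_right _ _) hcos
        _ = c₃ * β * Real.cos x / Real.sin x ^ 2 := by ring
    have hderiv : ∀ x ∈ Set.Icc α₀ (π / 2),
        HasDerivAt (fun y => -(c₃ * β) * (Real.sin y)⁻¹)
          (c₃ * β * Real.cos x / Real.sin x ^ 2) x := by
      intro x hx
      have hsx := hsinpos x hx
      have h := (Real.hasDerivAt_sin x).inv hsx.ne'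
      have h2 := h.const_mul (-(c₃ * β))
      exact h2.congr_deriv (by ring)
    have heq : (∫ α in α₀..(π / 2), c₃ * β * Real.cos α / Real.sin α ^ 2) =
        -(c₃ * β) * (Real.sin (π / 2))⁻¹ - -(c₃ * β) * (Real.sin α₀)⁻¹ := by
      refine intervalIntegral.integral_eq_sub_of_hasDerivAt (f := fun y => -(c₃ * β) * (Real.sin y)⁻¹) ?_ hGint
      intro x hx
      rw [Set.uIcc_of_le hα₀le] at hx
      exact hderiv x hx
    rw [heq, Real.sin_pi_div_two, hsin] at hle
    calc (∫ α in α₀..(π / 2), F α) ≤ -(c₃ * β) * (1:ℝ)⁻¹ - -(c₃ * β) * t⁻¹ := hle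
      _ = c₃ * β / t - c₃ * β := by field_simp; ring
  -- combine
  have hKsq : (2 * Real.sqrt (2 * c₁ * c₃ * β)) ^ 2 / 4 = 2 * c₁ * c₃ * β := by
    rw [mul_pow, Real.sq_sqrt (by positivity)]; ring
  have hKnn : 0 ≤ Real.sqrt (2 * c₁ * c₃ * β) := Real.sqrt_nonneg _
  rw [hsplit]
  have key : 2 * c₁ * t + (c₃ * β / t - c₃ * β) ≤ 2 * Real.sqrt (2 * c₁ * c₃ * β) := by
    rcases le_or_gt s₀ 1 with hcase | hcase
    · -- t = s₀
      have ht : t = s₀ := min_eq_right hcase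
      rw [ht]
      have h1 : 2 * c₁ * s₀ ^ 2 = c₃ * β := by
        rw [hs₀sq]; field_simp
      have hK : Real.sqrt (2 * c₁ * c₃ * β) * s₀ = c₃ * β := by
        have hsq : (Real.sqrt (2 * c₁ * c₃ * β) * s₀) ^ 2 = (c₃ * β) ^ 2 := by
          rw [mul_pow, Real.sq_sqrt (by positivity), hs₀sq]; field_simp
        have h := congrArg Real.sqrt hsq
        rwa [Real.sqrt_sq (mul_nonneg hKnn hs₀pos.le), Real.sqrt_sq hcb.le] at h
      have h2 : c₃ * β / s₀ = Real.sqrt (2 * c₁ * c₃ * β) := by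
        rw [← hK]; exact mul_div_cancel_right₀ _ hs₀pos.ne'
      have h3 : 2 * c₁ * s₀ = Real.sqrt (2 * c₁ * c₃ * β) := by
        apply mul_right_cancel₀ hs₀pos.ne'
        rw [hK, ← h1]; ring
      rw [h2, h3]
      linarith
    · -- t = 1
      have ht : t = 1 := min_eq_left hcase.le
      rw [ht]
      have h1 : 2 * c₁ < c₃ * β := by
        have hsq1 : 1 < s₀ ^ 2 := by nlinarith
        rw [hs₀sq] at hsq1
        have := (one_lt_div (show (0:ℝ) < 2 * c₁ by linarith)).mp hsq1
        linarith
      have h2 : 2 * c₁ ≤ Real.sqrt (2 * c₁ * c₃ * β) := by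
        have h := Real.sqrt_le_sqrt (show (2 * c₁) ^ 2 ≤ 2 * c₁ * c₃ * β by nlinarith)
        rwa [Real.sqrt_sq (by linarith)] at h
      calc 2 * c₁ * 1 + (c₃ * β / 1 - c₃ * β) = 2 * c₁ := by ring
        _ ≤ 2 * Real.sqrt (2 * c₁ * c₃ * β) := by linarith
  linarith
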